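/- Let T be a tree on n vertices and p a positive integer. Then there exists a subset U of the vertices with |U| ≤ 2n/p such that every connected component of T − U has at most p edges incident to it in T (counting edges inside the component and edges from the component to U). -/

import Mathlib

open SimpleGraph Finset

universe u

variable {V : Type u}

/-- Vertices reachable from `v` by a `G`-walk whose support stays in `A`. -/
def reachIn (G : SimpleGraph V) (A : Set V) (v : V) : Set V :=
  {x | ∃ w : G.Walk v x, ∀ y ∈ w.support, y ∈ A}

lemma reachIn_subset (G : SimpleGraph V) (A : Set V) (v : V) :
    reachIn G A v ⊆ A := fun _x ⟨w, hw⟩ => hw _ w.end_mem_support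

lemma self_mem_reachIn {G : SimpleGraph V} {A : Set V} {v : V} (hv : v ∈ A) :
    v ∈ reachIn G A v := ⟨SimpleGraph.Walk.nil, by simp [hv]⟩

lemma reachIn_adj {G : SimpleGraph V} {A : Set V} {v x y : V}
    (hx : x ∈ reachIn G A v) (h : G.Adj x y) (hy : y ∈ A) : y ∈ reachIn G A v := by
  obtain ⟨w, hw⟩ := hx
  refine ⟨w.append (SimpleGraph.Walk.cons h SimpleGraph.Walk.nil), ?_⟩
  intro z hz
  rw [SimpleGraph.Walk.support_append] at hz
  rcases List.mem_append.1 hz with h1 | h2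
  · exact hw _ h1
  · simp at h2; subst h2; exact hy

lemma reachIn_mono {G : SimpleGraph V} {A B : Set V} (h : A ⊆ B) (v : V) :
    reachIn G A v ⊆ reachIn G B v := by
  rintro x ⟨w, hw⟩
  exact ⟨w, fun y hy => h (hw y hy)⟩

lemma reachIn_walk_between {G : SimpleGraph V} {A : Set V} {v x y : V}
    (hx : x ∈ reachIn G A v) (hy : y ∈ reachIn G A v) :
    ∃ W : G.Walk x y, ∀ z ∈ W.support, z ∈ A := by
  obtain ⟨wx, hwx⟩ := hx
  obtain ⟨wy, hwy⟩ := hy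
  refine ⟨wx.reverse.append wy, ?_⟩
  intro z hz
  rw [SimpleGraph.Walk.support_append] at hz
  rcases List.mem_append.1 hz with h1 | h2
  · exact hwx _ (by rwa [SimpleGraph.Walk.support_reverse, List.mem_reverse] at h1)
  · exact hwy _ (List.mem_of_mem_tail h2)

/-- Lift a walk whose support is inside `s` to the induced graph. -/
lemma aux_walk_to_induce (G : SimpleGraph V) {s : Set V} :
    ∀ {a b : V} (w : G.Walk a b), (∀ y ∈ w.support, y ∈ s) →
    ∀ (ha : a ∈ s) (hb : b ∈ s),
      ∃ w' : (G.induce s).Walk ⟨a, ha⟩ ⟨b, hb⟩, ∀ z ∈ w'.support, (z : V) ∈ w.support := by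
  intro a b w
  induction w with
  | nil =>
    intro _ ha hb
    exact ⟨SimpleGraph.Walk.nil, by simp⟩
  | @cons a m b h p ih =>
    intro hs ha hb
    have hm : m ∈ s := hs m (by simp)
    obtain ⟨w', hw'⟩ := ih (fun y hy => hs y (by simp [hy])) hm hb
    have hadj : (G.induce s).Adj ⟨a, ha⟩ ⟨m, hm⟩ := h
    refine ⟨SimpleGraph.Walk.cons hadj w', ?_⟩
    intro z hz
    rw [SimpleGraph.Walk.support_cons] at hz
    rcases List.mem_cons.1 hz with h1 | h2
    · subst h1; simp
    · simp [hw' z h2]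

lemma aux_reach_induce (G : SimpleGraph V) {s : Set V} {a b : V} (w : G.Walk a b)
    (hs : ∀ y ∈ w.support, y ∈ s) (ha : a ∈ s) (hb : b ∈ s) :
    (G.induce s).Reachable ⟨a, ha⟩ ⟨b, hb⟩ := by
  obtain ⟨w', -⟩ := aux_walk_to_induce G w hs ha hb
  exact ⟨w'⟩

/-- Project a walk in the induced graph down to `G`. -/
lemma aux_walk_of_induce (G : SimpleGraph V) {s : Set V} :
    ∀ {x y : s} (w : (G.induce s).Walk x y),
      ∃ W : G.Walk ↑x ↑y, ∀ z ∈ W.support, ∃ hz : z ∈ s, (⟨z, hz⟩ : s) ∈ w.support := by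
  intro x y w
  induction w with
  | nil =>
    refine ⟨SimpleGraph.Walk.nil, ?_⟩
    intro z hz
    simp only [SimpleGraph.Walk.support_nil, List.mem_singleton] at hz
    subst hz
    exact ⟨Subtype.coe_prop _, by simp⟩
  | @cons a m b h p ih =>
    obtain ⟨W, hW⟩ := ih
    have hadj : G.Adj ↑a ↑m := h
    refine ⟨SimpleGraph.Walk.cons hadj W, ?_⟩
    intro z hz
    rw [SimpleGraph.Walk.support_cons] at hz
    rcases List.mem_cons.1 hz with h1 | h2
    · subst h1; exact ⟨a.2, by simp⟩
    · obtain ⟨hz1, hz2⟩ := hW z h2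
      exact ⟨hz1, by simp [hz2]⟩

lemma aux_acyclic_induce {G : SimpleGraph V} (h : G.IsAcyclic) (s : Set V) :
    (G.induce s).IsAcyclic := by
  intro v c hc
  exact h _ (hc.map (f := ⟨Subtype.val, fun {a b} hab => hab⟩) Subtype.val_injective)

/-- In an acyclic graph, two neighbours of `a` joined by a walk avoiding `a` coincide. -/
lemma aux_unique_nbr [DecidableEq V] {G : SimpleGraph V} (hG : G.IsAcyclic) {a x1 x2 : V}
    (h1 : G.Adj a x1) (h2 : G.Adj a x2) (W : G.Walk x1 x2) (ha : a ∉ W.support) :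
    x1 = x2 := by
  by_contra hne
  have hP := W.bypass_isPath
  have haP : a ∉ W.bypass.support := fun hx => ha (W.support_bypass_subset hx)
  have hP2 : (SimpleGraph.Walk.cons h1.symm (SimpleGraph.Walk.cons h2 SimpleGraph.Walk.nil) :
      G.Walk x1 x2).IsPath := by
    simp [SimpleGraph.Walk.cons_isPath_iff, h2.ne, hne, h1.ne', Ne.symm h1.ne']
  have heq := hG.path_unique ⟨W.bypass, hP⟩ ⟨_, hP2⟩
  apply haP
  have : W.bypass = SimpleGraph.Walk.cons h1.symm (SimpleGraph.Walk.cons h2 SimpleGraph.Walk.nil) :=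
    congrArg Subtype.val heq
  rw [this]; simp

/-- Walks starting in `S` and avoiding the unique attachment vertex `r` stay in `S`. -/
lemma aux_support_subset [DecidableEq V] {G : SimpleGraph V} {S : Set V} {r : V}
    (hcross : ∀ x y, x ∈ S → y ∉ S → G.Adj x y → x = r)
    {v b : V} (w : G.Walk v b) (hv : v ∈ S) (hr : r ∉ w.support) :
    ∀ z ∈ w.support, z ∈ S := by
  intro z hz
  by_contra hzS
  obtain ⟨d, hd, hdf, hds⟩ := (w.takeUntil z hz).exists_boundary_dart S hv hzS
  have : d.fst = r := hcross _ _ hdf hds d.adj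
  exact hr (w.support_takeUntil_subset hz
    (this ▸ SimpleGraph.Walk.dart_fst_mem_support_of_mem_darts _ hd))

/-- Walks starting outside `S` and avoiding the unique attachment vertex `r` stay outside `S`. -/
lemma aux_support_subset' [DecidableEq V] {G : SimpleGraph V} {S : Set V} {r : V}
    (hcross : ∀ x y, x ∈ S → y ∉ S → G.Adj x y → x = r)
    {v b : V} (w : G.Walk v b) (hv : v ∉ S) (hr : r ∉ w.support) :
    ∀ z ∈ w.support, z ∉ S := by
  intro z hz hzS
  obtain ⟨d, hd, hdf, hds⟩ := (w.takeUntil z hz).exists_boundary_dart Sᶜ hv (by simpa using hzS)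
  simp only [Set.mem_compl_iff, not_not] at hds hdf
  have : d.snd = r := hcross _ _ hds hdf d.adj.symm
  exact hr (w.support_takeUntil_subset hz
    (this ▸ SimpleGraph.Walk.dart_snd_mem_support_of_mem_darts _ hd))

lemma reachIn_connected [DecidableEq V] {G : SimpleGraph V} {A : Set V} {v : V} (hv : v ∈ A) :
    (G.induce (reachIn G A v)).Connected := by
  apply G.induce_connected_of_patches v (self_mem_reachIn hv)
  intro x hx
  obtain ⟨w, hw⟩ := hx
  have hsub : {z | z ∈ w.support} ⊆ reachIn G A v := by
    intro z hz
    exact ⟨w.takeUntil z hz, fun y hy => hw y (w.support_takeUntil_subset hz hy)⟩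
  exact ⟨{z | z ∈ w.support}, hsub, w.start_mem_support, w.end_mem_support,
    aux_reach_induce G w (fun y hy => hy) _ _⟩

theorem key_lemma : ∀ (n : ℕ) (V : Type u) [Fintype V] [DecidableEq V] (G : SimpleGraph V)
    [DecidableRel G.Adj], G.IsTree → Fintype.card V ≤ n → ∀ (c : V → ℕ) (p : ℕ), 0 < p →
    ∃ U : Finset V, U.card * p ≤ ∑ x, (G.degree x + c x) ∧
      ∀ v ∉ U, ∑ x ∈ (Set.toFinite (reachIn G (↑U : Set V)ᶜ v)).toFinset,
        (G.degree x + c x) ≤ p := by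
  intro n
  induction n using Nat.strong_induction_on with
  | _ n IH =>
  intro V _ _ G _ hT hn c p hp
  classical
  by_cases h0 : ∑ x, (G.degree x + c x) < p
  · refine ⟨∅, by simp, fun v _ => ?_⟩
    exact le_trans (Finset.sum_le_sum_of_subset (Finset.subset_univ _)) (le_of_lt h0)
  push_neg at h0
  set P : Finset V → Prop := fun S =>
    (p ≤ ∑ x ∈ S, (G.degree x + c x)) ∧ (G.induce (↑S : Set V)).Connected ∧
      (S = Finset.univ ∨ ∃ a u, a ∈ S ∧ u ∉ S ∧ G.Adj a u ∧
        ∀ x y, x ∈ S → y ∉ S → G.Adj x y → x = a ∧ y = u) with hPdef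
  have hPuniv : P Finset.univ := by
    rw [hPdef]
    refine ⟨by simpa using h0, ?_, Or.inl rfl⟩
    rw [Finset.coe_univ]
    exact ((induceUnivIso G).connected_iff).2 hT.isConnected
  obtain ⟨S, hSF, hSmin⟩ := (Finset.univ.filter P).exists_min_image Finset.card
    ⟨Finset.univ, Finset.mem_filter.2 ⟨Finset.mem_univ _, hPuniv⟩⟩
  have hPS : P S := (Finset.mem_filter.1 hSF).2
  have hSmin' : ∀ S', P S' → S.card ≤ S'.card := fun S' h =>
    hSmin S' (Finset.mem_filter.2 ⟨Finset.mem_univ _, h⟩)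
  obtain ⟨hPS1, hPS2, hPS3⟩ := hPS
  have claimC : ∀ r ∈ S, (∀ x y, x ∈ S → y ∉ S → G.Adj x y → x = r) → ∀ v ∈ S, v ≠ r →
      ∑ x ∈ (Set.toFinite (reachIn G ((↑S : Set V) \ {r}) v)).toFinset,
        (G.degree x + c x) < p := by
    intro r hr hcrossr v hv hvr
    by_contra hge
    push_neg at hge
    set A : Set V := (↑S : Set V) \ {r} with hA
    have hvA : v ∈ A := ⟨hv, hvr⟩
    have hsubA : reachIn G A v ⊆ A := reachIn_subset G A v
    have hrD : r ∉ reachIn G A v := fun h => (hsubA h).2 rfl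
    have hreach : (G.induce (↑S : Set V)).Reachable ⟨v, hv⟩ ⟨r, hr⟩ :=
      hPS2.preconnected _ _
    obtain ⟨w'⟩ := hreach
    obtain ⟨W, hW⟩ := aux_walk_of_induce G w'
    have hWS : ∀ z ∈ W.support, z ∈ (↑S : Set V) := fun z hz => (hW z hz).elim fun h _ => h
    obtain ⟨d, hd, hdf, hds⟩ := W.exists_boundary_dart (reachIn G A v)
      (self_mem_reachIn hvA) hrD
    have hdsS : d.snd ∈ (↑S : Set V) := hWS _ (W.dart_snd_mem_support_of_mem_darts hd)
    have hdsnd : d.snd = r := by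
      by_contra hne
      exact hds (reachIn_adj hdf d.adj ⟨hdsS, hne⟩)
    have hadj_r_fst : G.Adj r d.fst := by rw [← hdsnd]; exact d.adj.symm
    have hPD : P ((Set.toFinite (reachIn G A v)).toFinset) := by
      rw [hPdef]
      refine ⟨by simpa using hge, ?_, Or.inr ⟨d.fst, r, ?_, ?_, hadj_r_fst.symm, ?_⟩⟩
      · rw [Set.Finite.coe_toFinset]
        exact reachIn_connected hvA
      · exact (Set.Finite.mem_toFinset _).2 hdf
      · exact fun h => hrD ((Set.Finite.mem_toFinset _).1 h)
      · intro x y hx hy hxy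
        have hxR : x ∈ reachIn G A v := (Set.Finite.mem_toFinset _).1 hx
        have hyR : y ∉ reachIn G A v := fun h => hy ((Set.Finite.mem_toFinset _).2 h)
        have hyr : y = r := by
          by_contra hyr
          by_cases hyS : y ∈ S
          · exact hyR (reachIn_adj hxR hxy ⟨hyS, hyr⟩)
          · have hxr := hcrossr x y (hsubA hxR).1 hyS hxy
            exact (hsubA hxR).2 hxr
        refine ⟨?_, hyr⟩
        obtain ⟨W2, hW2⟩ := reachIn_walk_between hdf hxR
        have hrW2 : r ∉ W2.support := fun h => (hW2 r h).2 rfl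
        exact (aux_unique_nbr hT.IsAcyclic hadj_r_fst (by rw [← hyr]; exact hxy.symm)
          W2 hrW2).symm
    have hDsub : (Set.toFinite (reachIn G A v)).toFinset ⊆ S := fun x hx =>
      (hsubA ((Set.Finite.mem_toFinset _).1 hx)).1
    have hlt : ((Set.toFinite (reachIn G A v)).toFinset).card < S.card :=
      Finset.card_lt_card ((Finset.ssubset_iff_of_subset hDsub).2
        ⟨r, hr, fun h => hrD ((Set.Finite.mem_toFinset _).1 h)⟩)
    exact absurd (hSmin' _ hPD) (not_le.2 hlt)
  by_cases hSu : S = Finset.univ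
  · -- CASE A : remove one arbitrary vertex
    haveI : Nonempty V := hT.isConnected.nonempty
    set r : V := Classical.arbitrary V with hrdef
    have hcl := claimC r (by rw [hSu]; exact Finset.mem_univ _)
      (fun x y _ hy _ => absurd (by rw [hSu]; exact Finset.mem_univ y) hy)
    refine ⟨{r}, ?_, ?_⟩
    · simpa using le_trans hPS1 (Finset.sum_le_sum_of_subset (Finset.subset_univ S))
    · intro v hvU
      have hvr : v ≠ r := by simpa using hvU
      have hsub : reachIn G (↑({r} : Finset V) : Set V)ᶜ v ⊆
          reachIn G ((↑S : Set V) \ {r}) v := by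
        apply reachIn_mono
        intro z hz
        refine ⟨by rw [hSu]; simp, ?_⟩
        simpa using hz
      refine le_of_lt (lt_of_le_of_lt (Finset.sum_le_sum_of_subset ?_)
        (hcl v (by rw [hSu]; exact Finset.mem_univ v) hvr))
      intro x hx
      exact (Set.Finite.mem_toFinset _).2 (hsub ((Set.Finite.mem_toFinset _).1 hx))
  · -- CASE B : recurse on the complement of S
    obtain ⟨a, u, haS, huS, hau, hcross⟩ := hPS3.resolve_left hSu
    have hcross' : ∀ x y, x ∈ (↑S : Set V) → y ∉ (↑S : Set V) → G.Adj x y → x = a :=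
      fun x y hx hy hxy => (hcross x y hx (fun h => hy h) hxy).1
    set sT : Set V := (↑S : Set V)ᶜ with hsT
    haveI : Fintype ↥sT := (Set.toFinite sT).fintype
    set G' : SimpleGraph ↥sT := G.induce sT with hG'
    haveI : DecidableRel G'.Adj := Classical.decRel _
    have husT : u ∈ sT := fun h => huS h
    have hxSnot : ∀ x : ↥sT, (↑x : V) ∉ S := fun x h => x.2 h
    have hconn : G'.Connected := by
      have hpre : G'.Preconnected := by
        rintro x y
        obtain ⟨w0⟩ := hT.isConnected.preconnected ↑x ↑y
        set W := w0.bypass with hWdef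
        have hWp : W.IsPath := w0.bypass_isPath
        have hsup : ∀ z ∈ W.support, z ∈ sT := by
          intro z hz
          by_contra hzT
          have hzS : z ∈ S := not_not.mp hzT
          obtain ⟨d1, hd1, hdf1, hds1⟩ := (W.takeUntil z hz).exists_boundary_dart sT x.2
            (fun h => h hzS)
          have hds1' : d1.snd ∈ S := not_not.mp hds1
          have hdf1' : d1.fst ∉ S := hdf1
          obtain ⟨hda, hdu⟩ := hcross d1.snd d1.fst hds1' hdf1' d1.adj.symm
          obtain ⟨d2, hd2, hdf2, hds2⟩ := (W.dropUntil z hz).exists_boundary_dart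
            (↑S : Set V) hzS y.2
          obtain ⟨hda2, hdu2⟩ := hcross d2.fst d2.snd hdf2 hds2 d2.adj
          have hd1W : d1 ∈ W.darts := W.darts_takeUntil_subset hz hd1
          have hd2W : d2 ∈ W.darts := W.darts_dropUntil_subset hz hd2
          have hne : d1 ≠ d2 := by
            intro h
            have : u = a := by rw [← hdu, h, hda2]
            exact huS (this ▸ haS)
          have hedge : d1.edge = d2.edge := by
            have e1 : d1.edge = s(u, a) := by rw [← hdu, ← hda]; rfl
            have e2 : d2.edge = s(a, u) := by rw [← hda2, ← hdu2]; rfl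
            rw [e1, e2, Sym2.eq_swap]
          have hnd : (W.darts.map SimpleGraph.Dart.edge).Nodup := hWp.isTrail.edges_nodup
          exact hne (List.inj_on_of_nodup_map hnd hd1W hd2W hedge)
        exact aux_reach_induce G W hsup x.2 y.2
      exact (SimpleGraph.connected_iff _).mpr ⟨hpre, ⟨⟨u, husT⟩⟩⟩
    have hT' : G'.IsTree := ⟨hconn, aux_acyclic_induce hT.IsAcyclic sT⟩
    have hdegsplit : ∀ x : ↥sT,
        G.degree ↑x = G'.degree x + (G.neighborFinset ↑x ∩ S).card := by
      intro x
      have h1 : (G.neighborFinset ↑x \ S).card + (G.neighborFinset ↑x ∩ S).card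
          = G.degree ↑x := Finset.card_sdiff_add_card_inter _ _
      rw [← h1]
      congr 1
      have hbij : (G'.neighborFinset x).card = (G.neighborFinset ↑x \ S).card := by
        apply Finset.card_bij (fun (y : ↥sT) _ => (y : V))
        · intro y hy
          rw [SimpleGraph.mem_neighborFinset] at hy
          rw [Finset.mem_sdiff, SimpleGraph.mem_neighborFinset]
          exact ⟨hy, hxSnot y⟩
        · intro y1 _ y2 _ h
          exact Subtype.ext h
        · intro y hy
          rw [Finset.mem_sdiff, SimpleGraph.mem_neighborFinset] at hy
          refine ⟨⟨y, fun h => hy.2 h⟩, ?_, rfl⟩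
          rw [SimpleGraph.mem_neighborFinset]
          exact hy.1
      exact hbij.symm
    have hinter : ∀ x : ↥sT,
        (G.neighborFinset ↑x ∩ S).card = if (↑x : V) = u then 1 else 0 := by
      intro x
      by_cases hxu : (↑x : V) = u
      · rw [if_pos hxu, Finset.card_eq_one]
        refine ⟨a, ?_⟩
        ext y
        simp only [Finset.mem_inter, SimpleGraph.mem_neighborFinset, Finset.mem_singleton]
        constructor
        · rintro ⟨hadj, hyS⟩
          exact (hcross y ↑x hyS (hxSnot x) hadj.symm).1
        · rintro rfl
          exact ⟨by rw [hxu]; exact hau.symm, haS⟩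
      · rw [if_neg hxu, Finset.card_eq_zero, Finset.eq_empty_iff_forall_notMem]
        intro y hy
        rw [Finset.mem_inter, SimpleGraph.mem_neighborFinset] at hy
        exact hxu (hcross y ↑x hy.2 (hxSnot x) hy.1.symm).2
    set c' : ↥sT → ℕ := fun x => c ↑x + (if (↑x : V) = u then 1 else 0) with hc'
    have hdeg : ∀ x : ↥sT, G'.degree x + c' x = G.degree ↑x + c ↑x := by
      intro x
      rw [hc']
      rw [hdegsplit x, hinter x]
      ring
    have hScard : 1 ≤ S.card := Finset.card_pos.2 ⟨a, haS⟩
    have hcards : Fintype.card ↥sT = Fintype.card V - S.card := by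
      have h1 : (Set.toFinset sT).card = Fintype.card ↥sT := Set.toFinset_card sT
      have h2 : Set.toFinset sT = Sᶜ := by
        ext z
        simp [hsT]
      rw [← h1, h2, Finset.card_compl]
    have hSle : S.card ≤ Fintype.card V := Finset.card_le_univ S
    haveI : Nonempty V := hT.isConnected.nonempty
    have hVpos : 1 ≤ Fintype.card V := Fintype.card_pos
    have hcard' : Fintype.card ↥sT ≤ n - 1 := by omega
    obtain ⟨U', hU'1, hU'2⟩ := IH (n - 1) (by omega) ↥sT G' hT' hcard' c' p hp
    have hsum' : ∑ x : ↥sT, (G'.degree x + c' x) = ∑ y ∈ Sᶜ, (G.degree y + c y) := by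
      calc ∑ x : ↥sT, (G'.degree x + c' x) = ∑ x : ↥sT, (G.degree ↑x + c ↑x) :=
            Finset.sum_congr rfl (fun x _ => hdeg x)
        _ = ∑ y ∈ Sᶜ, (G.degree y + c y) :=
            (Finset.sum_subtype (p := fun y => y ∈ sT) Sᶜ
              (fun y => by rw [hsT]; simp) (fun y => G.degree y + c y)).symm
    set U : Finset V := insert a (U'.image Subtype.val) with hUdef
    have haU : a ∈ U := Finset.mem_insert_self _ _
    refine ⟨U, ?_, ?_⟩
    · have hanotin : a ∉ U'.image Subtype.val := by
        intro h
        obtain ⟨x, -, hx⟩ := Finset.mem_image.1 h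
        exact (hxSnot x) (hx ▸ haS)
      have himg : (U'.image Subtype.val).card = U'.card :=
        Finset.card_image_of_injective _ Subtype.val_injective
      rw [hUdef, Finset.card_insert_of_notMem hanotin, himg]
      have hle1 : U'.card * p ≤ ∑ y ∈ Sᶜ, (G.degree y + c y) := by
        rw [← hsum']
        exact hU'1
      have hle2 : p ≤ ∑ y ∈ S, (G.degree y + c y) := hPS1
      calc (U'.card + 1) * p = U'.card * p + p := by ring
        _ ≤ ∑ y ∈ Sᶜ, (G.degree y + c y) + ∑ y ∈ S, (G.degree y + c y) :=
            add_le_add hle1 hle2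
        _ = ∑ y, (G.degree y + c y) := Finset.sum_compl_add_sum _ _
    · intro v hvU
      have hva : v ≠ a := fun h => hvU (by rw [h]; exact haU)
      have hvim : v ∉ U'.image Subtype.val := fun h =>
        hvU (by rw [hUdef]; exact Finset.mem_insert_of_mem h)
      by_cases hvS : v ∈ S
      · -- frozen piece below the root a
        have hsubD : reachIn G (↑U : Set V)ᶜ v ⊆ reachIn G ((↑S : Set V) \ {a}) v := by
          rintro x ⟨w, hw⟩
          have haw : a ∉ w.support := fun h => (hw a h) haU
          have hsupS : ∀ z ∈ w.support, z ∈ (↑S : Set V) :=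
            aux_support_subset hcross' w hvS haw
          exact ⟨w, fun y hy => ⟨hsupS y hy, fun hyr => haw (hyr ▸ hy)⟩⟩
        refine le_of_lt (lt_of_le_of_lt (Finset.sum_le_sum_of_subset ?_)
          (claimC a haS (fun x y hx hy hxy => (hcross x y hx hy hxy).1) v hvS hva))
        intro x hx
        exact (Set.Finite.mem_toFinset _).2 (hsubD ((Set.Finite.mem_toFinset _).1 hx))
      · -- piece inside the complement, handled by induction
        have hvsT : v ∈ sT := fun h => hvS h
        have hvU' : (⟨v, hvsT⟩ : ↥sT) ∉ U' := fun h =>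
          hvim (Finset.mem_image.2 ⟨⟨v, hvsT⟩, h, rfl⟩)
        have hb := hU'2 ⟨v, hvsT⟩ hvU'
        have hseteq : (Set.toFinite (reachIn G (↑U : Set V)ᶜ v)).toFinset =
            ((Set.toFinite (reachIn G' (↑U' : Set ↥sT)ᶜ ⟨v, hvsT⟩)).toFinset).image
              Subtype.val := by
          ext z
          rw [Set.Finite.mem_toFinset]
          constructor
          · rintro ⟨w, hw⟩
            have haw : a ∉ w.support := fun h => (hw a h) haU
            have hvnS : v ∉ (↑S : Set V) := fun h => hvS h
            have hsupT : ∀ y ∈ w.support, y ∈ sT := by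
              intro y hy
              exact aux_support_subset' hcross' w hvnS haw y hy
            have hzT : z ∈ sT := hsupT z w.end_mem_support
            obtain ⟨w2, hw2⟩ := aux_walk_to_induce G w hsupT hvsT hzT
            rw [Finset.mem_image]
            refine ⟨⟨z, hzT⟩, (Set.Finite.mem_toFinset _).2 ⟨w2, ?_⟩, rfl⟩
            intro y hy hyU'
            exact (hw ↑y (hw2 y hy)) (by
              rw [hUdef]
              exact Finset.mem_insert_of_mem (Finset.mem_image.2 ⟨y, hyU', rfl⟩))
          · rw [Finset.mem_image]
            rintro ⟨x, hx, rfl⟩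
            obtain ⟨w2, hw2⟩ := (Set.Finite.mem_toFinset _).1 hx
            obtain ⟨W, hW⟩ := aux_walk_of_induce G w2
            refine ⟨W, ?_⟩
            intro y hy hyU
            obtain ⟨hy1, hy2⟩ := hW y hy
            rw [hUdef] at hyU
            rcases Finset.mem_insert.1 hyU with h1 | h2
            · exact hy1 (by rw [h1]; exact haS)
            · obtain ⟨x', hx', hval⟩ := Finset.mem_image.1 h2
              have hxx : x' = ⟨y, hy1⟩ := Subtype.ext hval
              exact (hw2 _ hy2) (hxx ▸ hx')
        rw [hseteq, Finset.sum_image (fun x _ y _ h => Subtype.ext h)]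
        calc ∑ x ∈ (Set.toFinite (reachIn G' (↑U' : Set ↥sT)ᶜ ⟨v, hvsT⟩)).toFinset,
              (G.degree ↑x + c ↑x)
            = ∑ x ∈ (Set.toFinite (reachIn G' (↑U' : Set ↥sT)ᶜ ⟨v, hvsT⟩)).toFinset,
              (G'.degree x + c' x) := Finset.sum_congr rfl (fun x _ => (hdeg x).symm)
          _ ≤ p := hb

set_option maxHeartbeats 1000000 in
theorem stmt_4 {V : Type*} [Fintype V] [DecidableEq V] (G : SimpleGraph V)
    (hT : G.IsTree) (p : ℕ) (hp : 0 < p) :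
    ∃ U : Finset V, U.card * p ≤ 2 * Fintype.card V ∧
      ∀ v : ((↑U : Set V)ᶜ : Set V),
        {e ∈ G.edgeSet | ∃ x : ((↑U : Set V)ᶜ : Set V),
          (G.induce ((↑U : Set V)ᶜ)).Reachable v x ∧ (x : V) ∈ e}.ncard ≤ p := by
  classical
  haveI : DecidableRel G.Adj := Classical.decRel _
  obtain ⟨U, hU1, hU2⟩ := key_lemma (Fintype.card V) V G hT le_rfl (fun _ => 0) p hp
  refine ⟨U, ?_, ?_⟩
  · calc U.card * p ≤ ∑ x, (G.degree x + 0) := hU1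
      _ = ∑ x, G.degree x := by simp
      _ = 2 * G.edgeFinset.card := G.sum_degrees_eq_twice_card_edges
      _ ≤ 2 * Fintype.card V := by
          have := hT.card_edgeFinset; omega
  · intro v
    have hvU : ↑v ∉ U := fun h => v.2 h
    have hb := hU2 ↑v hvU
    set D := (Set.toFinite (reachIn G (↑U : Set V)ᶜ ↑v)).toFinset with hD
    have hsub : {e ∈ G.edgeSet | ∃ x : ((↑U : Set V)ᶜ : Set V),
        (G.induce ((↑U : Set V)ᶜ)).Reachable v x ∧ (x : V) ∈ e} ⊆
        ((D.biUnion (fun x => G.incidenceFinset x) : Finset (Sym2 V)) : Set (Sym2 V)) := by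
      rintro e ⟨he, x, hreach, hxe⟩
      obtain ⟨w'⟩ := hreach
      obtain ⟨W, hW⟩ := aux_walk_of_induce G w'
      have hxD : (x : V) ∈ D := by
        rw [hD, Set.Finite.mem_toFinset]
        exact ⟨W, fun z hz => (hW z hz).elim fun h _ => h⟩
      simp only [Finset.coe_biUnion, Set.mem_iUnion, Finset.mem_coe]
      exact ⟨↑x, hxD, (G.mem_incidenceFinset _ _).2 ⟨he, hxe⟩⟩
    calc {e ∈ G.edgeSet | ∃ x : ((↑U : Set V)ᶜ : Set V),
        (G.induce ((↑U : Set V)ᶜ)).Reachable v x ∧ (x : V) ∈ e}.ncard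
        ≤ (((D.biUnion (fun x => G.incidenceFinset x) : Finset (Sym2 V)) : Set (Sym2 V)) : Set (Sym2 V)).ncard :=
          Set.ncard_le_ncard hsub (Finset.finite_toSet _)
      _ = (D.biUnion (fun x => G.incidenceFinset x)).card := Set.ncard_coe_finset _
      _ ≤ ∑ x ∈ D, (G.incidenceFinset x).card := Finset.card_biUnion_le
      _ = ∑ x ∈ D, G.degree x := by
          exact Finset.sum_congr rfl fun x _ => G.card_incidenceFinset_eq_degree _
      _ ≤ p := by simpa using hb
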